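/- There is a universal constant C > 0 with the following property. Let α = (α₁,α₂) ∈ ℝ², A ∈ ℝ, u a Lipschitz divergence-free vector field on ℝ², and let q be a C² function on ℝ² satisfying Δq - A u·∇q + |∇q|² ≥ 0, q(x₁+1,x₂) = q(x₁,x₂) + α₁, q(x₁,x₂+1) = q(x₁,x₂) + α₂, and ∫_{[0,1]²} q dx = 0. Then q(x) ≤ C(‖∇q‖_{L²([0,1]²)} + |α₁| + |α₂|) for all x ∈ [0,1]². -/

import Mathlib

open MeasureTheory Real
open scoped RealInnerProductSpace

noncomputable section

/-- The unit periodicity cell `[0,1]²`. -/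
def cube2 : Set (EuclideanSpace ℝ (Fin 2)) :=
  {x | ∀ i, x i ∈ Set.Icc (0 : ℝ) 1}

/-- The Laplacian of a scalar function on `ℝ²`. -/
def lap (f : EuclideanSpace ℝ (Fin 2) → ℝ) (x : EuclideanSpace ℝ (Fin 2)) : ℝ :=
  ∑ i, ⟪fderiv ℝ (gradient f) x (EuclideanSpace.single i 1), EuclideanSpace.single i 1⟫

/-- The divergence of a vector field on `ℝ²`. -/
def divg (u : EuclideanSpace ℝ (Fin 2) → EuclideanSpace ℝ (Fin 2))
    (x : EuclideanSpace ℝ (Fin 2)) : ℝ :=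
  ∑ i, fderiv ℝ u x (EuclideanSpace.single i 1) i
namespace Stmt8

abbrev E2 := EuclideanSpace ℝ (Fin 2)

def ee (i : Fin 2) : E2 := EuclideanSpace.single i (1:ℝ)

lemma inner_ee_left (i : Fin 2) (v : E2) : ⟪ee i, v⟫ = v i := by
  simp [ee, EuclideanSpace.inner_single_left]

lemma inner_ee_right (i : Fin 2) (v : E2) : ⟪v, ee i⟫ = v i := by
  simp [ee, EuclideanSpace.inner_single_right]

lemma norm_ee (i : Fin 2) : ‖ee i‖ = 1 := by
  simp [ee]

lemma hasDerivAt_affine (x e : E2) (t : ℝ) :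
    HasDerivAt (fun s : ℝ => x + s • e) e t := by
  simpa using ((hasDerivAt_id t).smul_const e).const_add x

/-- directional derivative along a line, from gradients -/
lemma line_hasDerivAt {f : E2 → ℝ} {gf : E2 → E2} (hf : ∀ y, HasGradientAt f (gf y) y)
    (x e : E2) (s : ℝ) :
    HasDerivAt (fun t : ℝ => f (x + t • e)) ⟪gf (x + s • e), e⟫ s := by
  have h1 := hasDerivAt_affine x e s
  have h2 := (hf (x + s • e)).hasFDerivAt
  have h3 := h2.comp_hasDerivAt s h1
  simp [InnerProductSpace.toDual_apply_apply] at h3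
  exact h3

/-- derivative of the directional derivative along a line, at time 0 -/
lemma line_grad_hasDerivAt {gf : E2 → E2} (hgf : Differentiable ℝ gf) (x e : E2) :
    HasDerivAt (fun s : ℝ => ⟪gf (x + s • e), e⟫) ⟪fderiv ℝ gf x e, e⟫ 0 := by
  have h1 := hasDerivAt_affine x e 0
  have h2 : HasFDerivAt gf (fderiv ℝ gf x) (x + (0:ℝ) • e) := by
    simpa using (hgf x).hasFDerivAt
  have h3 : HasDerivAt (fun s : ℝ => gf (x + s • e)) (fderiv ℝ gf x e) 0 :=
    h2.comp_hasDerivAt 0 h1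
  have h4 := h3.inner (𝕜 := ℝ) (hasDerivAt_const (0:ℝ) e)
  simpa using h4

/-- second derivative test: at an interior local max, second derivative is ≤ 0 -/
lemma second_deriv_test {g dg : ℝ → ℝ} {c : ℝ} (hg : ∀ s, HasDerivAt g (dg s) s)
    (hdg : HasDerivAt dg c 0) (hmax : IsLocalMax g 0) : c ≤ 0 := by
  by_contra hc
  push_neg at hc
  have h0 : dg 0 = 0 := by
    have := hmax.deriv_eq_zero
    rwa [(hg 0).deriv] at this
  -- slope of dg at 0 tends to c > 0
  have hsl : Filter.Tendsto (slope dg 0) (nhdsWithin 0 {(0:ℝ)}ᶜ) (nhds c) :=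
    hasDerivAt_iff_tendsto_slope.mp hdg
  have hev : ∀ᶠ t in nhdsWithin 0 {(0:ℝ)}ᶜ, 0 < slope dg 0 t :=
    hsl.eventually (eventually_gt_nhds hc)
  have hev' : ∀ᶠ t in nhdsWithin (0:ℝ) (Set.Ioi 0), 0 < dg t := by
    have hmono : nhdsWithin (0:ℝ) (Set.Ioi 0) ≤ nhdsWithin 0 {(0:ℝ)}ᶜ :=
      nhdsWithin_mono 0 (fun t ht => ne_of_gt ht)
    filter_upwards [hmono hev, self_mem_nhdsWithin] with t ht ht'
    simp only [slope, h0, sub_zero, vsub_eq_sub, smul_eq_mul] at ht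
    have := mul_pos (show (0:ℝ) < t from ht') ht
    rwa [mul_inv_cancel_left₀ (ne_of_gt ht')] at this
  obtain ⟨δ, hδ0, hδ⟩ := (mem_nhdsGT_iff_exists_Ioc_subset).mp hev'
  -- g strictly monotone on [0, δ]
  have hmono : StrictMonoOn g (Set.Icc 0 δ) := by
    apply strictMonoOn_of_deriv_pos (convex_Icc 0 δ)
    · exact fun t _ => (hg t).continuousAt.continuousWithinAt
    · intro t ht
      rw [interior_Icc] at ht
      rw [(hg t).deriv]
      exact hδ ⟨ht.1, le_of_lt ht.2⟩
  -- contradiction with local max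
  obtain ⟨ε, hε0, hε⟩ := Metric.eventually_nhds_iff.mp hmax
  set t := min δ (ε/2) with ht
  have ht0 : 0 < t := lt_min hδ0 (by linarith)
  have h1 : g 0 < g t := hmono ⟨le_refl 0, le_of_lt hδ0⟩ ⟨le_of_lt ht0, min_le_left _ _⟩ ht0
  have h2 : g t ≤ g 0 := by
    apply hε
    simp only [dist_zero_right, Real.norm_eq_abs, abs_of_pos ht0]
    calc t ≤ ε/2 := min_le_right _ _
    _ < ε := by linarith
  linarith


lemma gradient_eq_comp (q : E2 → ℝ) :
    gradient q = fun y => (InnerProductSpace.toDual ℝ E2).symm (fderiv ℝ q y) := rfl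

lemma differentiable_gradient {q : E2 → ℝ} (hq : ContDiff ℝ 2 q) :
    Differentiable ℝ (gradient q) := by
  rw [gradient_eq_comp]
  have h1 : ContDiff ℝ 1 (fderiv ℝ q) := hq.fderiv_right (by norm_num)
  exact fun x => ((InnerProductSpace.toDual ℝ E2).symm.toContinuousLinearEquiv
    |>.differentiableAt).comp x (h1.differentiable (by norm_num) x)

lemma continuous_gradient {q : E2 → ℝ} (hq : ContDiff ℝ 2 q) :
    Continuous (gradient q) :=
  (differentiable_gradient hq).continuous

-- the weight function
variable (l : ℝ)

def wf (l : ℝ) : E2 → ℝ := fun x => Real.exp (l * x 0)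
def gwf (l : ℝ) : E2 → E2 := fun x => (l * Real.exp (l * x 0)) • ee 0

lemma proj_hasFDerivAt (i : Fin 2) (x : E2) :
    HasFDerivAt (fun y : E2 => y i) (EuclideanSpace.proj i : E2 →L[ℝ] ℝ) x :=
  (EuclideanSpace.proj i : E2 →L[ℝ] ℝ).hasFDerivAt

lemma wf_hasFDerivAt (x : E2) :
    HasFDerivAt (wf l) ((l * Real.exp (l * x 0)) • (EuclideanSpace.proj 0 : E2 →L[ℝ] ℝ)) x := by
  have h1 : HasFDerivAt (fun y : E2 => l * y 0) (l • (EuclideanSpace.proj 0 : E2 →L[ℝ] ℝ)) x :=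
    (proj_hasFDerivAt 0 x).const_mul l
  have h2 := (Real.hasDerivAt_exp (l * x 0)).comp_hasFDerivAt x h1
  have : Real.exp (l * x 0) • l • (EuclideanSpace.proj 0 : E2 →L[ℝ] ℝ)
      = (l * Real.exp (l * x 0)) • (EuclideanSpace.proj 0 : E2 →L[ℝ] ℝ) := by
    rw [smul_smul, mul_comm]
  rwa [this] at h2

lemma toDual_smul_ee (c : ℝ) (i : Fin 2) :
    (InnerProductSpace.toDual ℝ E2) (c • ee i) = c • (EuclideanSpace.proj i : E2 →L[ℝ] ℝ) := by
  ext y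
  simp [InnerProductSpace.toDual_apply_apply, real_inner_smul_left, ee,
    EuclideanSpace.inner_single_left]

lemma wf_hasGradientAt (x : E2) : HasGradientAt (wf l) (gwf l x) x := by
  rw [hasGradientAt_iff_hasFDerivAt, gwf, toDual_smul_ee]
  exact wf_hasFDerivAt l x

lemma gwf_hasFDerivAt (x : E2) :
    HasFDerivAt (gwf l)
      (((l * l * Real.exp (l * x 0)) • (EuclideanSpace.proj 0 : E2 →L[ℝ] ℝ)).smulRight (ee 0))
      x := by
  have h1 : HasFDerivAt (fun y : E2 => l * Real.exp (l * y 0))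
      ((l * l * Real.exp (l * x 0)) • (EuclideanSpace.proj 0 : E2 →L[ℝ] ℝ)) x := by
    have := (wf_hasFDerivAt l x).const_mul l
    rwa [smul_smul, ← mul_assoc] at this
  exact h1.smul_const (ee 0)

lemma gwf_second (x : E2) (i : Fin 2) :
    ⟪fderiv ℝ (gwf l) x (ee i), ee i⟫ = if i = 0 then l * l * Real.exp (l * x 0) else 0 := by
  rw [(gwf_hasFDerivAt l x).fderiv]
  simp only [ContinuousLinearMap.smulRight_apply, ContinuousLinearMap.smul_apply]
  rw [real_inner_smul_left]
  have h1 : (EuclideanSpace.proj (0:Fin 2) : E2 →L[ℝ] ℝ) (ee i) = if i = 0 then 1 else 0 := by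
    fin_cases i <;> simp [ee]
  have h2 : ⟪ee 0, ee i⟫ = if i = 0 then 1 else 0 := by
    fin_cases i <;> simp [ee, EuclideanSpace.inner_single_left]
  rw [h1, h2]
  fin_cases i <;> simp

lemma differentiable_gwf : Differentiable ℝ (gwf l) :=
  fun x => (gwf_hasFDerivAt l x).differentiableAt

lemma contDiff_wf : ContDiff ℝ 2 (wf l) := by
  apply Real.contDiff_exp.comp
  exact contDiff_const.mul (EuclideanSpace.proj (0:Fin 2) : E2 →L[ℝ] ℝ).contDiff


-- ### The box and its topology

def box (p1 P1 p2 P2 : ℝ) : Set E2 :=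
  {x | x 0 ∈ Set.Icc p1 P1 ∧ x 1 ∈ Set.Icc p2 P2}

lemma norm_le_coords (x : E2) : ‖x‖ ≤ |x 0| + |x 1| := by
  rw [EuclideanSpace.norm_eq]
  rw [show ∑ i, ‖x i‖ ^ 2 = ‖x 0‖^2 + ‖x 1‖^2 from Fin.sum_univ_two _]
  have h : ‖x 0‖^2 + ‖x 1‖^2 ≤ (|x 0| + |x 1|)^2 := by
    simp only [Real.norm_eq_abs]
    nlinarith [abs_nonneg (x 0), abs_nonneg (x 1)]
  calc Real.sqrt (‖x 0‖^2 + ‖x 1‖^2) ≤ Real.sqrt ((|x 0| + |x 1|)^2) := Real.sqrt_le_sqrt h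
  _ = |x 0| + |x 1| := Real.sqrt_sq (by positivity)

lemma isClosed_box (p1 P1 p2 P2 : ℝ) : IsClosed (box p1 P1 p2 P2) := by
  have h0 : Continuous (fun y : E2 => y 0) := (EuclideanSpace.proj (0:Fin 2) : E2 →L[ℝ] ℝ).continuous
  have h1 : Continuous (fun y : E2 => y 1) := (EuclideanSpace.proj (1:Fin 2) : E2 →L[ℝ] ℝ).continuous
  exact (isClosed_Icc.preimage h0).inter (isClosed_Icc.preimage h1)

lemma isCompact_box (p1 P1 p2 P2 : ℝ) : IsCompact (box p1 P1 p2 P2) := by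
  apply IsCompact.of_isClosed_subset
    (isCompact_closedBall (0:E2) (|p1| + |P1| + |p2| + |P2|)) (isClosed_box p1 P1 p2 P2)
  intro x hx
  obtain ⟨⟨h10, h11⟩, h20, h21⟩ := hx
  rw [Metric.mem_closedBall, dist_zero_right]
  have e0 : |x 0| ≤ |p1| + |P1| := by
    rw [abs_le]
    constructor
    · linarith [neg_abs_le p1, abs_nonneg P1]
    · linarith [le_abs_self P1, abs_nonneg p1]
  have e1 : |x 1| ≤ |p2| + |P2| := by
    rw [abs_le]
    constructor
    · linarith [neg_abs_le p2, abs_nonneg P2]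
    · linarith [le_abs_self P2, abs_nonneg p2]
  calc ‖x‖ ≤ |x 0| + |x 1| := norm_le_coords x
  _ ≤ |p1| + |P1| + (|p2| + |P2|) := by linarith
  _ = |p1| + |P1| + |p2| + |P2| := by ring

lemma coords_combo (s t : ℝ) : ∀ i : Fin 2, ((s • ee 0 + t • ee 1) : E2) i
    = if i = 0 then s else t := by
  intro i
  fin_cases i <;> simp [ee]

lemma box_nonempty {p1 P1 p2 P2 : ℝ} (h1 : p1 ≤ P1) (h2 : p2 ≤ P2) :
    (box p1 P1 p2 P2).Nonempty := by
  refine ⟨p1 • ee 0 + p2 • ee 1, ?_, ?_⟩ <;>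
    simp [ee, Set.mem_Icc, h1, h2, le_refl]

-- ### The maximum principle

lemma max_principle {q : E2 → ℝ} (hq : ContDiff ℝ 2 q) (A : ℝ) (u : E2 → E2)
    (hpde : ∀ x, 0 ≤ lap q x - A * ⟪u x, gradient q x⟫ + ‖gradient q x‖ ^ 2)
    (p1 P1 p2 P2 : ℝ) (h1 : p1 ≤ P1) (h2 : p2 ≤ P2) (U : ℝ) (hU0 : 0 ≤ U)
    (hU : ∀ x : E2, x ∈ box p1 P1 p2 P2 → A * (u x 0) ≤ U)
    (M : ℝ)
    (hbd : ∀ x : E2, x ∈ box p1 P1 p2 P2 →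
      (x 0 = p1 ∨ x 0 = P1 ∨ x 1 = p2 ∨ x 1 = P2) → q x ≤ M) :
    ∀ x ∈ box p1 P1 p2 P2, q x ≤ M := by
  intro x hx
  have hqdiff : Differentiable ℝ q := hq.differentiable (by norm_num)
  set l : ℝ := U + 1 with hl
  have hl0 : (0:ℝ) < l := by simp only [hl]; linarith
  set B : ℝ := Real.exp (l * P1) with hB
  have hB0 : (0:ℝ) < B := Real.exp_pos _
  apply le_of_forall_pos_le_add
  intro η hη
  set ε : ℝ := min (η / B) (1 / (2 * l * B)) with hε
  have hε0 : 0 < ε := lt_min (by positivity) (by positivity)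
  have hεB : ε * B ≤ η := by
    calc ε * B ≤ (η / B) * B :=
      mul_le_mul_of_nonneg_right (min_le_left _ _) hB0.le
    _ = η := by field_simp
  have hεlB : ε * (l * B) ≤ 1/2 := by
    calc ε * (l * B) ≤ (1 / (2 * l * B)) * (l * B) :=
      mul_le_mul_of_nonneg_right (min_le_right _ _) (by positivity)
    _ = 1/2 := by field_simp
  set qe : E2 → ℝ := fun y => q y + ε * wf l y with hqe
  set ge : E2 → E2 := fun y => gradient q y + ε • gwf l y with hge
  have hqe_grad : ∀ y, HasGradientAt qe (ge y) y := by
    intro y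
    have hA := (hqdiff y).hasGradientAt.hasFDerivAt
    have hBf := ((wf_hasGradientAt l y).hasFDerivAt).const_mul ε
    have hC := hA.add hBf
    rw [hasGradientAt_iff_hasFDerivAt]
    simp only [hge, map_add, _root_.map_smul]
    exact hC
  have hqe_diff : Differentiable ℝ qe := fun y => (hqe_grad y).differentiableAt
  have hqe_cont : Continuous qe := hqe_diff.continuous
  have hwle : ∀ y ∈ box p1 P1 p2 P2, wf l y ≤ B := by
    intro y hy
    exact Real.exp_le_exp.2 (mul_le_mul_of_nonneg_left hy.1.2 hl0.le)
  obtain ⟨x₀, hx₀S, hmax⟩ := (isCompact_box p1 P1 p2 P2).exists_isMaxOn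
    (box_nonempty h1 h2) hqe_cont.continuousOn
  suffices hb : qe x₀ ≤ M + ε * B by
    have hq_le : q x ≤ qe x := by
      have hwf0 : 0 < ε * wf l x := mul_pos hε0 (Real.exp_pos (l * x 0))
      simp only [hqe]; linarith
    have h' : qe x ≤ qe x₀ := hmax hx
    linarith
  by_cases hbdy : x₀ 0 = p1 ∨ x₀ 0 = P1 ∨ x₀ 1 = p2 ∨ x₀ 1 = P2
  · have hM := hbd x₀ hx₀S hbdy
    have hwx : ε * wf l x₀ ≤ ε * B := mul_le_mul_of_nonneg_left (hwle x₀ hx₀S) hε0.le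
    simp only [hqe]; linarith
  · exfalso
    push_neg at hbdy
    obtain ⟨hb1, hb2, hb3, hb4⟩ := hbdy
    have hin0 : x₀ 0 ∈ Set.Ioo p1 P1 :=
      ⟨lt_of_le_of_ne hx₀S.1.1 (Ne.symm hb1), lt_of_le_of_ne hx₀S.1.2 hb2⟩
    have hin1 : x₀ 1 ∈ Set.Ioo p2 P2 :=
      ⟨lt_of_le_of_ne hx₀S.2.1 (Ne.symm hb3), lt_of_le_of_ne hx₀S.2.2 hb4⟩
    have hopen : IsOpen {y : E2 | y 0 ∈ Set.Ioo p1 P1 ∧ y 1 ∈ Set.Ioo p2 P2} := by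
      have h0 : Continuous (fun y : E2 => y 0) :=
        (EuclideanSpace.proj (0:Fin 2) : E2 →L[ℝ] ℝ).continuous
      have h1' : Continuous (fun y : E2 => y 1) :=
        (EuclideanSpace.proj (1:Fin 2) : E2 →L[ℝ] ℝ).continuous
      exact (isOpen_Ioo.preimage h0).inter (isOpen_Ioo.preimage h1')
    have hnhds : box p1 P1 p2 P2 ∈ nhds x₀ := by
      apply Filter.mem_of_superset (hopen.mem_nhds ⟨hin0, hin1⟩)
      intro y hy
      exact ⟨Set.Ioo_subset_Icc_self hy.1, Set.Ioo_subset_Icc_self hy.2⟩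
    have hloc : IsLocalMax qe x₀ := hmax.isLocalMax hnhds
    have hge0 : ge x₀ = 0 := by
      have hf1 := (hqe_grad x₀).hasFDerivAt
      have h3 := hloc.hasFDerivAt_eq_zero hf1
      have h4 := congrArg (InnerProductSpace.toDual ℝ E2).symm h3
      simpa using h4
    set c : ℝ := ε * (l * Real.exp (l * x₀ 0)) with hc
    have hcpos : 0 < c := by positivity
    have hcle : c ≤ 1/2 := by
      have hwx : Real.exp (l * x₀ 0) ≤ B := hwle x₀ hx₀S
      have hstep : c ≤ ε * (l * B) := by
        rw [hc]
        exact mul_le_mul_of_nonneg_left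
          (mul_le_mul_of_nonneg_left hwx hl0.le) hε0.le
      exact hstep.trans hεlB
    have hgq : gradient q x₀ = (-c) • ee 0 := by
      have h' : gradient q x₀ + ε • gwf l x₀ = 0 := hge0
      have hsm : ε • gwf l x₀ = c • ee 0 := by
        rw [show gwf l x₀ = (l * Real.exp (l * x₀ 0)) • ee 0 from rfl, smul_smul, ← hc]
      rw [hsm] at h'
      rw [eq_neg_of_add_eq_zero_left h', neg_smul]
    have hged : Differentiable ℝ ge := by
      intro y
      exact ((differentiable_gradient hq) y).add (((differentiable_gwf l) y).const_smul ε)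
    have hkey : ∀ i : Fin 2, ⟪fderiv ℝ (gradient q) x₀ (ee i), ee i⟫
        + ε * ⟪fderiv ℝ (gwf l) x₀ (ee i), ee i⟫ ≤ 0 := by
      intro i
      have hd1 : ∀ s : ℝ, HasDerivAt (fun t : ℝ => qe (x₀ + t • ee i))
          ⟪ge (x₀ + s • ee i), ee i⟫ s := fun s => line_hasDerivAt hqe_grad x₀ (ee i) s
      have hd2 : HasDerivAt (fun s : ℝ => ⟪ge (x₀ + s • ee i), ee i⟫)
          ⟪fderiv ℝ ge x₀ (ee i), ee i⟫ 0 := line_grad_hasDerivAt hged x₀ (ee i)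
      have hlm : IsLocalMax (fun t : ℝ => qe (x₀ + t • ee i)) 0 := by
        have hct : Continuous (fun t : ℝ => x₀ + t • ee i) :=
          continuous_const.add (continuous_id.smul continuous_const)
        have hmap : Filter.Tendsto (fun t : ℝ => x₀ + t • ee i) (nhds 0) (nhds x₀) := by
          have h5 := hct.continuousAt (x := (0:ℝ))
          simpa [ContinuousAt] using h5
        have hev := hmap.eventually hloc
        filter_upwards [hev] with t ht
        simpa using ht
      have htest := second_deriv_test hd1 hd2 hlm
      have hfd : fderiv ℝ ge x₀ = fderiv ℝ (gradient q) x₀ + ε • fderiv ℝ (gwf l) x₀ := by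
        have hdd1 : DifferentiableAt ℝ (gradient q) x₀ := (differentiable_gradient hq) x₀
        have hdd2 : DifferentiableAt ℝ (gwf l) x₀ := (differentiable_gwf l) x₀
        simp only [hge]
        rw [fderiv_fun_add hdd1 (show DifferentiableAt ℝ (fun y => ε • gwf l y) x₀ from hdd2.const_smul ε), fderiv_fun_const_smul hdd2]
      rw [hfd] at htest
      simpa [ContinuousLinearMap.add_apply, ContinuousLinearMap.smul_apply,
        inner_add_left, real_inner_smul_left, mul_add, mul_assoc] using htest
    -- assemble the contradiction
    have hk0 := hkey 0
    have hk1 := hkey 1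
    have hw0 : ⟪fderiv ℝ (gwf l) x₀ (ee 0), ee 0⟫ = l * l * Real.exp (l * x₀ 0) := by
      simpa using gwf_second l x₀ 0
    have hw1 : ⟪fderiv ℝ (gwf l) x₀ (ee 1), ee 1⟫ = 0 := by
      simpa using gwf_second l x₀ 1
    have hlap : lap q x₀ = ⟪fderiv ℝ (gradient q) x₀ (ee 0), ee 0⟫
        + ⟪fderiv ℝ (gradient q) x₀ (ee 1), ee 1⟫ := by
      simp only [lap, Fin.sum_univ_two]
      rfl
    have hsum : lap q x₀ + l * c ≤ 0 := by
      have hlc : l * c = ε * (l * l * Real.exp (l * x₀ 0)) := by rw [hc]; ring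
      rw [hlap, hlc]
      rw [hw0] at hk0
      rw [hw1] at hk1
      linarith
    have hpde0 := hpde x₀
    rw [hgq] at hpde0
    have hinner : ⟪u x₀, (-c) • ee 0⟫ = -c * (u x₀ 0) := by
      rw [real_inner_smul_right, inner_ee_right]
    have hnorm : ‖(-c) • ee 0‖^2 = c^2 := by
      rw [norm_smul, norm_ee]
      simp [sq_abs]
    rw [hinner, hnorm] at hpde0
    have hAu : A * (u x₀ 0) ≤ U := hU x₀ hx₀S
    have hprod : c * (A * (u x₀ 0)) ≤ c * U := mul_le_mul_of_nonneg_left hAu hcpos.le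
    have hsq : c^2 ≤ c * (1/2) := by
      calc c^2 = c * c := sq c
      _ ≤ c * (1/2) := mul_le_mul_of_nonneg_left hcle hcpos.le
    have hrw : A * (-c * (u x₀ 0)) = -(c * (A * (u x₀ 0))) := by ring
    have hUc : l * c = U * c + c := by rw [hl]; ring
    rw [hrw] at hpde0
    have hcu : c * U = U * c := by ring
    linarith


-- ### Measure-theoretic setup

def I01 : Set ℝ := Set.Icc 0 1

def mu01 : Measure ℝ := volume.restrict I01

instance : IsProbabilityMeasure mu01 :=
  ⟨by simp [mu01, I01, Real.volume_Icc]⟩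

def pi2 : Measure (ℝ × ℝ) := mu01.prod mu01

instance : IsProbabilityMeasure pi2 := by
  unfold pi2; infer_instance

lemma pi2_eq : pi2 = (volume : Measure (ℝ × ℝ)).restrict (I01 ×ˢ I01) := by
  rw [pi2, mu01, Measure.prod_restrict, ← Measure.volume_eq_prod]

def Phi : ℝ × ℝ → E2 := fun p => p.1 • ee 0 + p.2 • ee 1

lemma Phi_apply (p : ℝ × ℝ) (i : Fin 2) : Phi p i = if i = 0 then p.1 else p.2 := by
  simpa [Phi] using coords_combo p.1 p.2 i

lemma continuous_Phi : Continuous Phi :=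
  (continuous_fst.smul continuous_const).add (continuous_snd.smul continuous_const)

lemma Phi_surj (x : E2) : Phi (x 0, x 1) = x := by
  ext i
  fin_cases i <;> simp [Phi, ee]

lemma Phi_vshift (a s t : ℝ) : Phi (a, s) + t • ee 1 = Phi (a, s + t) := by
  simp only [Phi, add_smul]
  module

lemma Phi_hshift (a s t : ℝ) : Phi (a, s) + t • ee 0 = Phi (a + t, s) := by
  simp only [Phi, add_smul]
  module

def Psi : E2 ≃ᵐ ℝ × ℝ :=
  (MeasurableEquiv.toLp 2 (Fin 2 → ℝ)).symm.trans (MeasurableEquiv.finTwoArrow)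

lemma Psi_mp : MeasurePreserving Psi volume volume :=
  (volume_preserving_finTwoArrow ℝ).comp
    (EuclideanSpace.volume_preserving_symm_measurableEquiv_toLp (Fin 2))

lemma Psi_apply (x : E2) : Psi x = (x 0, x 1) := rfl

lemma Psi_symm_eq (p : ℝ × ℝ) : Psi.symm p = Phi p := by
  have h1 : Psi (Phi p) = p := by
    rw [Psi_apply]
    simp [Phi_apply]
  have h2 := congrArg Psi.symm h1
  rw [MeasurableEquiv.symm_apply_apply] at h2
  exact h2.symm

lemma cube2_eq_preimage : cube2 = Psi ⁻¹' (I01 ×ˢ I01) := by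
  ext x
  simp only [cube2, Set.mem_setOf_eq, Set.mem_preimage, Psi_apply, Set.mem_prod, I01]
  constructor
  · intro h; exact ⟨h 0, h 1⟩
  · intro h i; fin_cases i
    · exact h.1
    · exact h.2

lemma cube2_eq_box : cube2 = box 0 1 0 1 := by
  ext x
  simp only [cube2, Set.mem_setOf_eq, box]
  constructor
  · intro h; exact ⟨h 0, h 1⟩
  · intro h i; fin_cases i
    · exact h.1
    · exact h.2

lemma cube2_measurable : MeasurableSet cube2 := by
  rw [cube2_eq_box]
  exact (isClosed_box 0 1 0 1).measurableSet

lemma integral_cube (F : E2 → ℝ) :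
    ∫ y in cube2, F y = ∫ p, F (Phi p) ∂pi2 := by
  have h2 := Psi_mp.setIntegral_preimage_emb Psi.measurableEmbedding
      (fun p => F (Phi p)) (I01 ×ˢ I01)
  have h1 : ∫ y in cube2, F y = ∫ x in Psi ⁻¹' (I01 ×ˢ I01), F (Phi (Psi x)) := by
    rw [← cube2_eq_preimage]
    apply setIntegral_congr_fun cube2_measurable
    intro x _
    show F x = F (Phi (Psi x))
    rw [← Psi_symm_eq, MeasurableEquiv.symm_apply_apply]
  rw [h1, pi2_eq]
  exact h2

lemma integrable_pi2 {F : ℝ × ℝ → ℝ} (hF : Continuous F) : Integrable F pi2 := by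
  rw [pi2_eq]
  exact hF.continuousOn.integrableOn_compact (isCompact_Icc.prod isCompact_Icc)

lemma integrable_mu01 {F : ℝ → ℝ} (hF : Continuous F) : Integrable F mu01 :=
  hF.continuousOn.integrableOn_compact isCompact_Icc

-- selection of a good line
lemma exists_small_line {T : ℝ → ℝ} (hT : Integrable T mu01)
    {B δ : ℝ} (hB : ∫ a, T a ∂mu01 ≤ B) (hδ : 0 < δ) :
    ∃ a ∈ I01, T a ≤ B + δ := by
  by_contra hcon
  push_neg at hcon
  have hae : ∀ᵐ a ∂mu01, a ∈ I01 := ae_restrict_mem measurableSet_Icc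
  have hmono : ∫ _, (B + δ) ∂mu01 ≤ ∫ a, T a ∂mu01 := by
    apply integral_mono_ae (integrable_const _) hT
    filter_upwards [hae] with a ha
    exact (hcon a ha).le
  rw [integral_const] at hmono
  simp only [measure_univ, ENNReal.toReal_one, probReal_univ, one_mul, one_smul, smul_eq_mul] at hmono
  linarith

-- Cauchy–Schwarz type bound via AM-GM
lemma integral_abs_le {X : Type*} [MeasurableSpace X] (ν : Measure X) [IsProbabilityMeasure ν]
    {g : X → ℝ} (hg : Integrable g ν) (hg2 : Integrable (fun x => (g x)^2) ν)
    {B ρ : ℝ} (hB : ∫ x, (g x)^2 ∂ν ≤ B) (hB0 : 0 ≤ B) (hρ : 0 < ρ) :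
    ∫ x, |g x| ∂ν ≤ Real.sqrt B + ρ := by
  set η : ℝ := Real.sqrt B + ρ with hη
  have hη0 : 0 < η := by
    have := Real.sqrt_nonneg B
    simp only [hη]; linarith
  have hpt : ∀ x, |g x| ≤ ((g x)^2 + η^2) / (2*η) := by
    intro x
    rw [le_div_iff₀ (by positivity)]
    nlinarith [sq_nonneg (|g x| - η), sq_abs (g x)]
  have hint1 : ∫ x, |g x| ∂ν ≤ ∫ x, ((g x)^2 + η^2) / (2*η) ∂ν := by
    apply integral_mono hg.abs ((hg2.add (integrable_const _)).div_const _)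
    exact hpt
  have hint2 : ∫ x, ((g x)^2 + η^2) / (2*η) ∂ν = ((∫ x, (g x)^2 ∂ν) + η^2) / (2*η) := by
    rw [integral_div, integral_add hg2 (integrable_const _), integral_const]
    simp [measure_univ]
  have hfin : ((∫ x, (g x)^2 ∂ν) + η^2) / (2*η) ≤ η := by
    rw [div_le_iff₀ (by positivity)]
    have hBη : B ≤ η^2 := by
      have h1 : Real.sqrt B ^ 2 = B := Real.sq_sqrt hB0
      have h2 : 0 ≤ Real.sqrt B := Real.sqrt_nonneg B
      nlinarith
    nlinarith
  rw [hint2] at hint1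
  exact hint1.trans hfin

-- oscillation along a unit segment
lemma osc_line {q : E2 → ℝ} (hq : ContDiff ℝ 2 q) (z e : E2) {t s : ℝ}
    (ht : t ∈ I01) (hs : s ∈ I01) :
    |q (z + s • e) - q (z + t • e)|
      ≤ ∫ r in I01, |⟪gradient q (z + r • e), e⟫| := by
  have hqdiff : Differentiable ℝ q := hq.differentiable (by norm_num)
  set D : ℝ → ℝ := fun r => ⟪gradient q (z + r • e), e⟫ with hD
  have hDc : Continuous D := by
    apply Continuous.inner
    · exact (continuous_gradient hq).comp
        (continuous_const.add (continuous_id.smul continuous_const))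
    · exact continuous_const
  have hDnn : IntegrableOn (fun r => |D r|) I01 volume :=
    hDc.abs.continuousOn.integrableOn_compact isCompact_Icc
  have key : ∀ t' s' : ℝ, t' ∈ I01 → s' ∈ I01 → t' ≤ s' →
      |q (z + s' • e) - q (z + t' • e)| ≤ ∫ r in I01, |D r| := by
    intro t' s' ht' hs' hle
    have heq : ∫ r in t'..s', D r = q (z + s' • e) - q (z + t' • e) := by
      apply intervalIntegral.integral_eq_sub_of_hasDerivAt
      · intro r _
        exact line_hasDerivAt (fun y => (hqdiff y).hasGradientAt) z e r
      · exact hDc.intervalIntegrable t' s'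
    rw [← heq, intervalIntegral.integral_of_le hle]
    calc |∫ r in Set.Ioc t' s', D r| ≤ ∫ r in Set.Ioc t' s', |D r| := by
          simpa [Real.norm_eq_abs] using
            norm_integral_le_integral_norm (μ := volume.restrict (Set.Ioc t' s')) D
    _ ≤ ∫ r in I01, |D r| := by
      apply setIntegral_mono_set hDnn
      · filter_upwards with r
        exact abs_nonneg _
      · have hsub : Set.Ioc t' s' ⊆ I01 :=
          fun r hr => ⟨le_trans ht'.1 hr.1.le, le_trans hr.2 hs'.2⟩
        exact HasSubset.Subset.eventuallyLE hsub
  rcases le_total t s with hle | hle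
  · exact key t s ht hs hle
  · rw [abs_sub_comm]
    exact key s t hs ht hle

end Stmt8

open Stmt8

set_option maxHeartbeats 2000000 in
/-- There is a universal constant `C > 0` such that whenever `q` satisfies
`Δq - A u·∇q + |∇q|² ≥ 0` with Lipschitz divergence-free `u`, the shift conditions
`q(x₁+1,x₂) = q(x₁,x₂) + α₁`, `q(x₁,x₂+1) = q(x₁,x₂) + α₂`, and has mean zero on `[0,1]²`,
then `q(x) ≤ C(‖∇q‖_{L²([0,1]²)} + |α₁| + |α₂|)` on `[0,1]²`. -/
theorem stmt8 :
    ∃ C : ℝ, 0 < C ∧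
      ∀ (α₁ α₂ A : ℝ) (u : EuclideanSpace ℝ (Fin 2) → EuclideanSpace ℝ (Fin 2))
        (K : NNReal), LipschitzWith K u → (∀ x, divg u x = 0) →
        ∀ q : EuclideanSpace ℝ (Fin 2) → ℝ, ContDiff ℝ 2 q →
        (∀ x, 0 ≤ lap q x - A * ⟪u x, gradient q x⟫ + ‖gradient q x‖ ^ 2) →
        (∀ x, q (x + EuclideanSpace.single 0 1) = q x + α₁) →
        (∀ x, q (x + EuclideanSpace.single 1 1) = q x + α₂) →
        (∫ x in cube2, q x) = 0 →
        ∀ x ∈ cube2,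
          q x ≤ C * (Real.sqrt (∫ y in cube2, ‖gradient q y‖ ^ 2) + |α₁| + |α₂|) := by
  refine ⟨3, by norm_num, ?_⟩
  intro α₁ α₂ A u K hLip hdiv q hq hpde hper1 hper2 hmean x hx
  have hqdiff : Differentiable ℝ q := hq.differentiable (by norm_num)
  have hgqc : Continuous (gradient q) := continuous_gradient hq
  set Gsq : ℝ := ∫ y in cube2, ‖gradient q y‖ ^ 2 with hGsqdef
  set G : ℝ := Real.sqrt Gsq with hGdef
  have hGsq0 : 0 ≤ Gsq := setIntegral_nonneg cube2_measurable (fun y _ => by positivity)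
  have hG0 : 0 ≤ G := Real.sqrt_nonneg _
  have hGsqG : G ^ 2 = Gsq := Real.sq_sqrt hGsq0
  show q x ≤ 3 * (G + |α₁| + |α₂|)
  suffices key : ∀ δ : ℝ, 0 < δ →
      q x ≤ 3 * G + |α₁| + |α₂| + (2 * Real.sqrt δ + 3 * δ) by
    have h3 : q x ≤ 3 * G + |α₁| + |α₂| := by
      by_contra hcon
      push_neg at hcon
      set γ : ℝ := q x - (3 * G + |α₁| + |α₂|) with hγ
      have hγ0 : 0 < γ := by simp only [hγ]; linarith
      set δ₀ : ℝ := min 1 ((γ / 6) ^ 2) with hδ₀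
      have hδ0 : 0 < δ₀ := lt_min one_pos (by positivity)
      have hk := key δ₀ hδ0
      have hs1 : Real.sqrt δ₀ ≤ γ / 6 := by
        calc Real.sqrt δ₀ ≤ Real.sqrt ((γ / 6) ^ 2) := Real.sqrt_le_sqrt (min_le_right _ _)
        _ = γ / 6 := Real.sqrt_sq (by positivity)
      have hs2 : δ₀ ≤ γ / 6 := by
        have h1 : δ₀ ≤ 1 := min_le_left _ _
        have hsle1 : Real.sqrt δ₀ ≤ 1 := by
          rw [show (1:ℝ) = Real.sqrt 1 by simp]
          exact Real.sqrt_le_sqrt h1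
        have h2 : δ₀ ≤ Real.sqrt δ₀ := by
          nlinarith [Real.sq_sqrt hδ0.le, Real.sqrt_nonneg δ₀]
        linarith
      linarith
    linarith [abs_nonneg α₁, abs_nonneg α₂]
  intro δ hδ
  -- transported data
  set f : ℝ × ℝ → ℝ := fun p => q (Phi p) with hfdef
  set d1 : ℝ × ℝ → ℝ := fun p => ⟪gradient q (Phi p), ee 0⟫ with hd1def
  set d2 : ℝ × ℝ → ℝ := fun p => ⟪gradient q (Phi p), ee 1⟫ with hd2def
  set n2 : ℝ × ℝ → ℝ := fun p => ‖gradient q (Phi p)‖ ^ 2 with hn2def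
  have hfc : Continuous f := hq.continuous.comp continuous_Phi
  have hgPhi : Continuous (fun p : ℝ × ℝ => gradient q (Phi p)) := hgqc.comp continuous_Phi
  have hd1c : Continuous d1 := hgPhi.inner continuous_const
  have hd2c : Continuous d2 := hgPhi.inner continuous_const
  have hn2c : Continuous n2 := hgPhi.norm.pow 2
  have hmean' : ∫ p, f p ∂pi2 = 0 := by
    rw [← integral_cube]; exact hmean
  have hGsq' : ∫ p, n2 p ∂pi2 = Gsq := by
    simp only [hn2def]
    rw [hGsqdef]
    exact (integral_cube (fun y => ‖gradient q y‖ ^ 2)).symm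
  have hd1sq : ∀ p, (d1 p) ^ 2 ≤ n2 p := by
    intro p
    have h := abs_real_inner_le_norm (gradient q (Phi p)) (ee 0)
    rw [norm_ee, mul_one] at h
    calc (d1 p) ^ 2 = |d1 p| ^ 2 := (sq_abs _).symm
    _ ≤ ‖gradient q (Phi p)‖ ^ 2 := pow_le_pow_left₀ (abs_nonneg _) h 2
    _ = n2 p := rfl
  have hd2sq : ∀ p, (d2 p) ^ 2 ≤ n2 p := by
    intro p
    have h := abs_real_inner_le_norm (gradient q (Phi p)) (ee 1)
    rw [norm_ee, mul_one] at h
    calc (d2 p) ^ 2 = |d2 p| ^ 2 := (sq_abs _).symm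
    _ ≤ ‖gradient q (Phi p)‖ ^ 2 := pow_le_pow_left₀ (abs_nonneg _) h 2
    _ = n2 p := rfl
  have hfint : Integrable f pi2 := integrable_pi2 hfc
  have hn2int : Integrable n2 pi2 := integrable_pi2 hn2c
  -- select good lines
  have hTaint : Integrable (fun a => ∫ t, n2 (a, t) ∂mu01) mu01 := hn2int.integral_prod_left
  have hTasum : ∫ a, (∫ t, n2 (a, t) ∂mu01) ∂mu01 = Gsq := by
    rw [← hGsq']; exact (integral_prod n2 hn2int).symm
  obtain ⟨a, ha, hTa⟩ := exists_small_line hTaint (le_of_eq hTasum) hδ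
  have hTbint : Integrable (fun b => ∫ s, n2 (s, b) ∂mu01) mu01 := hn2int.swap.integral_prod_left
  have hTbsum : ∫ b, (∫ s, n2 (s, b) ∂mu01) ∂mu01 = Gsq := by
    rw [← hGsq']; exact (integral_prod_symm n2 hn2int).symm
  obtain ⟨b, hb, hTb⟩ := exists_small_line hTbint (le_of_eq hTbsum) hδ
  -- oscillation bounds
  have hoscV : ∀ a' s t : ℝ, s ∈ I01 → t ∈ I01 →
      |f (a', s) - f (a', t)| ≤ ∫ r, |d2 (a', r)| ∂mu01 := by
    intro a' s t hs ht
    have h := osc_line hq (Phi (a', 0)) (ee 1) ht hs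
    have hrw : ∀ r : ℝ, Phi (a', 0) + r • ee 1 = Phi (a', r) := by
      intro r; rw [Phi_vshift]; norm_num
    simp only [hrw] at h
    exact h
  have hoscH : ∀ b' s t : ℝ, s ∈ I01 → t ∈ I01 →
      |f (s, b') - f (t, b')| ≤ ∫ r, |d1 (r, b')| ∂mu01 := by
    intro b' s t hs ht
    have h := osc_line hq (Phi (0, b')) (ee 0) ht hs
    have hrw : ∀ r : ℝ, Phi (0, b') + r • ee 0 = Phi (r, b') := by
      intro r; rw [Phi_hshift]; norm_num
    simp only [hrw] at h
    exact h
  -- AM-GM bounds on the good lines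
  set SQ : ℝ := Real.sqrt (Gsq + δ) + δ with hSQdef
  have hga : Continuous (fun r : ℝ => d2 (a, r)) := hd2c.comp (Continuous.prodMk_right a)
  have hBa : ∫ r, d2 (a, r) ^ 2 ∂mu01 ≤ Gsq + δ := by
    have hmono : ∫ r, d2 (a, r) ^ 2 ∂mu01 ≤ ∫ r, n2 (a, r) ∂mu01 :=
      integral_mono (integrable_mu01 (hga.pow 2))
        (integrable_mu01 (hn2c.comp (Continuous.prodMk_right a))) (fun r => hd2sq (a, r))
    linarith
  have hHa : (∫ r, |d2 (a, r)| ∂mu01) ≤ SQ := by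
    rw [hSQdef]
    exact integral_abs_le mu01 (integrable_mu01 hga) (integrable_mu01 (hga.pow 2))
      hBa (by positivity) hδ
  have hgb : Continuous (fun s : ℝ => d1 (s, b)) := hd1c.comp (Continuous.prodMk_left b)
  have hBb : ∫ s, d1 (s, b) ^ 2 ∂mu01 ≤ Gsq + δ := by
    have hmono : ∫ s, d1 (s, b) ^ 2 ∂mu01 ≤ ∫ s, n2 (s, b) ∂mu01 :=
      integral_mono (integrable_mu01 (hgb.pow 2))
        (integrable_mu01 (hn2c.comp (Continuous.prodMk_left b))) (fun s => hd1sq (s, b))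
    linarith
  have hHb : (∫ s, |d1 (s, b)| ∂mu01) ≤ SQ := by
    rw [hSQdef]
    exact integral_abs_le mu01 (integrable_mu01 hgb) (integrable_mu01 (hgb.pow 2))
      hBb (by positivity) hδ
  set H : ℝ → ℝ := fun a' => ∫ r, |d2 (a', r)| ∂mu01 with hHdef
  have hHint : Integrable H mu01 := (integrable_pi2 hd2c.abs).integral_prod_left
  have hBg : ∫ p, d2 p ^ 2 ∂pi2 ≤ Gsq := by
    have hmono : ∫ p, d2 p ^ 2 ∂pi2 ≤ ∫ p, n2 p ∂pi2 :=
      integral_mono (integrable_pi2 (hd2c.pow 2)) hn2int hd2sq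
    linarith [hGsq'.ge]
  have hHsum : ∫ a', H a' ∂mu01 ≤ G + δ := by
    have h1 : ∫ a', H a' ∂mu01 = ∫ p, |d2 p| ∂pi2 := by
      simp only [hHdef]
      exact (integral_prod _ (integrable_pi2 hd2c.abs)).symm
    rw [h1, hGdef]
    exact integral_abs_le pi2 (integrable_pi2 hd2c) (integrable_pi2 (hd2c.pow 2))
      hBg hGsq0 hδ
  -- the center bound
  set Fcol : ℝ → ℝ := fun a' => ∫ t, f (a', t) ∂mu01 with hFcoldef
  have hFcolint : Integrable Fcol mu01 := hfint.integral_prod_left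
  have hFcolmean : ∫ a', Fcol a' ∂mu01 = 0 := by
    have h1 := integral_prod f hfint
    rw [← h1]; exact hmean'
  have hcenter : |f (a, b)| ≤ SQ + (G + δ) := by
    have hbH : ∀ a' ∈ I01, |f (a, b) - Fcol a'| ≤ (∫ s, |d1 (s, b)| ∂mu01) + H a' := by
      intro a' ha'
      have hint' : Integrable (fun t' => f (a', t')) mu01 :=
        integrable_mu01 (hfc.comp (Continuous.prodMk_right a'))
      have heq : f (a, b) - Fcol a' = ∫ t', (f (a, b) - f (a', t')) ∂mu01 := by
        rw [integral_sub (integrable_const _) hint', integral_const]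
        simp [measure_univ]; rfl
      rw [heq]
      have hstep : ∀ᵐ t' ∂mu01, |f (a, b) - f (a', t')|
          ≤ (∫ s, |d1 (s, b)| ∂mu01) + H a' := by
        have hae : ∀ᵐ t' ∂mu01, t' ∈ I01 := ae_restrict_mem measurableSet_Icc
        filter_upwards [hae] with t' ht'
        have h1 : |f (a, b) - f (a', b)| ≤ ∫ s, |d1 (s, b)| ∂mu01 := hoscH b a a' ha ha'
        have h2 : |f (a', b) - f (a', t')| ≤ H a' := hoscV a' b t' hb ht'
        calc |f (a, b) - f (a', t')|
            ≤ |f (a, b) - f (a', b)| + |f (a', b) - f (a', t')| := abs_sub_le _ _ _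
        _ ≤ _ := add_le_add h1 h2
      calc |∫ t', (f (a, b) - f (a', t')) ∂mu01| ≤ ∫ t', |f (a, b) - f (a', t')| ∂mu01 := by
            simpa [Real.norm_eq_abs] using
              norm_integral_le_integral_norm (μ := mu01) (fun t' => f (a, b) - f (a', t'))
      _ ≤ ∫ _t', ((∫ s, |d1 (s, b)| ∂mu01) + H a') ∂mu01 :=
          integral_mono_ae ((integrable_const _).sub hint').abs (integrable_const _) hstep
      _ = (∫ s, |d1 (s, b)| ∂mu01) + H a' := by
          rw [integral_const]; simp [measure_univ]
    have heq2 : f (a, b) = ∫ a', (f (a, b) - Fcol a') ∂mu01 := by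
      rw [integral_sub (integrable_const _) hFcolint, hFcolmean, integral_const]
      simp [measure_univ]
    have hae : ∀ᵐ a' ∂mu01, a' ∈ I01 := ae_restrict_mem measurableSet_Icc
    calc |f (a, b)| = |∫ a', (f (a, b) - Fcol a') ∂mu01| := by rw [← heq2]
    _ ≤ ∫ a', |f (a, b) - Fcol a'| ∂mu01 := by
        simpa [Real.norm_eq_abs] using
          norm_integral_le_integral_norm (μ := mu01) (fun a' => f (a, b) - Fcol a')
    _ ≤ ∫ a', ((∫ s, |d1 (s, b)| ∂mu01) + H a') ∂mu01 := by
        apply integral_mono_ae ((integrable_const _).sub hFcolint).abs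
          ((integrable_const _).add hHint)
        filter_upwards [hae] with a' ha'
        exact hbH a' ha'
    _ = (∫ s, |d1 (s, b)| ∂mu01) + ∫ a', H a' ∂mu01 := by
        rw [integral_add (integrable_const _) hHint, integral_const]
        simp [measure_univ]
    _ ≤ SQ + (G + δ) := add_le_add hHb hHsum
  -- bounds along the two good lines
  set Mline : ℝ := SQ + (G + δ) + SQ with hMlinedef
  have hlineV : ∀ s ∈ I01, |f (a, s)| ≤ Mline := by
    intro s hs
    have h1 := hoscV a s b hs hb
    calc |f (a, s)| = |(f (a, s) - f (a, b)) + f (a, b)| := by ring_nf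
    _ ≤ |f (a, s) - f (a, b)| + |f (a, b)| := abs_add_le _ _
    _ ≤ (∫ r, |d2 (a, r)| ∂mu01) + (SQ + (G + δ)) := add_le_add h1 hcenter
    _ ≤ Mline := by rw [hMlinedef]; linarith [hHa]
  have hlineH : ∀ t ∈ I01, |f (t, b)| ≤ Mline := by
    intro t ht
    have h1 := hoscH b t a ht ha
    calc |f (t, b)| = |(f (t, b) - f (a, b)) + f (a, b)| := by ring_nf
    _ ≤ |f (t, b) - f (a, b)| + |f (a, b)| := abs_add_le _ _
    _ ≤ (∫ s, |d1 (s, b)| ∂mu01) + (SQ + (G + δ)) := add_le_add h1 hcenter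
    _ ≤ Mline := by rw [hMlinedef]; linarith [hHb]
  -- periodicity in transported coordinates
  have hper1' : ∀ t b' : ℝ, f (t + 1, b') = f (t, b') + α₁ := by
    intro t b'
    have h := hper1 (Phi (t, b'))
    rw [show Phi (t, b') + EuclideanSpace.single 0 1 = Phi (t + 1, b') by
      rw [← Phi_hshift t b' 1]; congr 1; simp [ee]] at h
    exact h
  have hper2' : ∀ a' s : ℝ, f (a', s + 1) = f (a', s) + α₂ := by
    intro a' s
    have h := hper2 (Phi (a', s))
    rw [show Phi (a', s) + EuclideanSpace.single 1 1 = Phi (a', s + 1) by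
      rw [← Phi_vshift a' s 1]; congr 1; simp [ee]] at h
    exact h
  -- boundary bounds for the big square
  have hvert : ∀ s : ℝ, b - 1 ≤ s → s ≤ b + 1 → f (a, s) ≤ Mline + |α₂| := by
    intro s hs1 hs2
    by_cases hc1 : s < 0
    · have hmem : s + 1 ∈ I01 := ⟨by linarith [hb.1], by linarith⟩
      have hsh := hper2' a s
      have hfb := (le_abs_self _).trans (hlineV (s + 1) hmem)
      linarith [neg_abs_le α₂]
    · by_cases hc2 : 1 < s
      · have hmem : s - 1 ∈ I01 := ⟨by linarith, by linarith [hb.2]⟩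
        have hsh := hper2' a (s - 1)
        rw [show s - 1 + 1 = s by ring] at hsh
        have hfb := (le_abs_self _).trans (hlineV (s - 1) hmem)
        linarith [le_abs_self α₂]
      · have hmem : s ∈ I01 := ⟨by linarith, by linarith⟩
        have hfb := (le_abs_self _).trans (hlineV s hmem)
        linarith [abs_nonneg α₂]
  have hhoriz : ∀ t : ℝ, a - 1 ≤ t → t ≤ a + 1 → f (t, b) ≤ Mline + |α₁| := by
    intro t ht1 ht2
    by_cases hc1 : t < 0
    · have hmem : t + 1 ∈ I01 := ⟨by linarith [ha.1], by linarith⟩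
      have hsh := hper1' t b
      have hfb := (le_abs_self _).trans (hlineH (t + 1) hmem)
      linarith [neg_abs_le α₁]
    · by_cases hc2 : 1 < t
      · have hmem : t - 1 ∈ I01 := ⟨by linarith, by linarith [ha.2]⟩
        have hsh := hper1' (t - 1) b
        rw [show t - 1 + 1 = t by ring] at hsh
        have hfb := (le_abs_self _).trans (hlineH (t - 1) hmem)
        linarith [le_abs_self α₁]
      · have hmem : t ∈ I01 := ⟨by linarith, by linarith⟩
        have hfb := (le_abs_self _).trans (hlineH t hmem)
        linarith [abs_nonneg α₁]
  -- the velocity bound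
  set U : ℝ := |A| * (4 * K + ‖u 0‖) with hUdef
  have hU0 : 0 ≤ U := by positivity
  have hU : ∀ y : E2, y ∈ box (a - 1) (a + 1) (b - 1) (b + 1) → A * (u y 0) ≤ U := by
    intro y hy
    have h1 : |u y 0| ≤ ‖u y‖ := by
      have h := abs_real_inner_le_norm (u y) (ee 0)
      rwa [inner_ee_right, norm_ee, mul_one] at h
    have h2 : ‖u y‖ ≤ K * ‖y‖ + ‖u 0‖ := by
      have h3 := hLip.dist_le_mul y 0
      rw [dist_eq_norm, dist_eq_norm, sub_zero] at h3
      linarith [norm_sub_norm_le (u y) (u 0)]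
    have h4 : ‖y‖ ≤ 4 := by
      obtain ⟨⟨hy00, hy01⟩, hy10, hy11⟩ := hy
      have e0 : |y 0| ≤ 2 := abs_le.mpr ⟨by linarith [ha.1], by linarith [ha.2]⟩
      have e1 : |y 1| ≤ 2 := abs_le.mpr ⟨by linarith [hb.1], by linarith [hb.2]⟩
      linarith [norm_le_coords y]
    calc A * (u y 0) ≤ |A * (u y 0)| := le_abs_self _
    _ = |A| * |u y 0| := abs_mul _ _
    _ ≤ |A| * ((K : ℝ) * 4 + ‖u 0‖) := by
        apply mul_le_mul_of_nonneg_left _ (abs_nonneg A)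
        calc |u y 0| ≤ ‖u y‖ := h1
        _ ≤ K * ‖y‖ + ‖u 0‖ := h2
        _ ≤ (K : ℝ) * 4 + ‖u 0‖ := by
            have hK0 : (0:ℝ) ≤ (K : ℝ) := K.coe_nonneg
            nlinarith [mul_le_mul_of_nonneg_left h4 hK0]
    _ = U := by rw [hUdef]; ring
  -- boundary bound for the maximum principle
  have hbd : ∀ y : E2, y ∈ box (a - 1) (a + 1) (b - 1) (b + 1) →
      (y 0 = a - 1 ∨ y 0 = a + 1 ∨ y 1 = b - 1 ∨ y 1 = b + 1) →
      q y ≤ Mline + (|α₁| + |α₂|) := by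
    intro y hy hcase
    have hyf : q y = f (y 0, y 1) := congrArg q (Phi_surj y).symm
    obtain ⟨⟨hy00, hy01⟩, hy10, hy11⟩ := hy
    rcases hcase with h | h | h | h
    · have hsh := hper1' (a - 1) (y 1)
      rw [show a - 1 + 1 = a by ring] at hsh
      have hv := hvert (y 1) hy10 hy11
      rw [hyf, h]
      linarith [neg_abs_le α₁]
    · have hsh := hper1' a (y 1)
      have hv := hvert (y 1) hy10 hy11
      rw [hyf, h]
      linarith [le_abs_self α₁]
    · have hsh := hper2' (y 0) (b - 1)
      rw [show b - 1 + 1 = b by ring] at hsh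
      have hv := hhoriz (y 0) hy00 hy01
      rw [hyf, h]
      linarith [neg_abs_le α₂]
    · have hsh := hper2' (y 0) b
      have hv := hhoriz (y 0) hy00 hy01
      rw [hyf, h]
      linarith [le_abs_self α₂]
  -- conclude with the maximum principle
  have hbox : x ∈ box (a - 1) (a + 1) (b - 1) (b + 1) := by
    refine ⟨⟨?_, ?_⟩, ?_, ?_⟩
    · linarith [(hx 0).1, ha.2]
    · linarith [(hx 0).2, ha.1]
    · linarith [(hx 1).1, hb.2]
    · linarith [(hx 1).2, hb.1]
  have hfinal := max_principle hq A u hpde (a - 1) (a + 1) (b - 1) (b + 1)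
    (by linarith) (by linarith) U hU0 hU (Mline + (|α₁| + |α₂|)) hbd x hbox
  have hsq2 : Real.sqrt (Gsq + δ) ≤ G + Real.sqrt δ := by
    have h1 : Gsq + δ ≤ (G + Real.sqrt δ) ^ 2 := by
      nlinarith [Real.sq_sqrt hδ.le, Real.sqrt_nonneg δ]
    calc Real.sqrt (Gsq + δ) ≤ Real.sqrt ((G + Real.sqrt δ) ^ 2) := Real.sqrt_le_sqrt h1
    _ = G + Real.sqrt δ := Real.sqrt_sq (by positivity)
  have hSQle : SQ ≤ G + Real.sqrt δ + δ := by
    rw [hSQdef]; linarith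
  rw [hMlinedef] at hfinal
  linarith
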